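/- Let h₁, h₂, h₃, h₄ be rational numbers with h₁ ≠ 0 and h₂ ≠ 0. In the field of formal Laurent series ℚ((s)), consider the element (e^{h₃ s} - e^{h₄ s}) / ((1 - e^{h₁ s})·(1 - e^{h₂ s})), where e^{h s} denotes the formal power series ∑_{n ≥ 0} hⁿ sⁿ / n! regarded as a Laurent series, and the division is taken in the field ℚ((s)) (the denominator is nonzero since h₁, h₂ ≠ 0). Then the coefficient of s^0 of this Laurent series equals (h₄ - h₃)·(h₁ + h₂ - h₃ - h₄) / (2·h₁·h₂). -/

import Mathlib

open PowerSeries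

/-- For rational `h₁, h₂, h₃, h₄` with `h₁ ≠ 0` and `h₂ ≠ 0`, the constant
term (coefficient of `s ^ 0`) of the formal Laurent series
`(e^{h₃ s} - e^{h₄ s}) / ((1 - e^{h₁ s}) * (1 - e^{h₂ s}))`
equals `(h₄ - h₃) * (h₁ + h₂ - h₃ - h₄) / (2 * h₁ * h₂)`. Here `e^{h s}` is the exponential
power series `∑ hⁿ sⁿ / n!`, i.e. `rescale h (exp ℚ)`, viewed as a Laurent series. -/
theorem constant_term_exp_fraction (h₁ h₂ h₃ h₄ : ℚ) (H₁ : h₁ ≠ 0) (H₂ : h₂ ≠ 0) :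
    HahnSeries.coeff
      (((rescale h₃ (exp ℚ) : PowerSeries ℚ) - (rescale h₄ (exp ℚ) : PowerSeries ℚ) :
          LaurentSeries ℚ) /
        ((1 - ((rescale h₁ (exp ℚ) : PowerSeries ℚ) : LaurentSeries ℚ)) *
          (1 - ((rescale h₂ (exp ℚ) : PowerSeries ℚ) : LaurentSeries ℚ))))
      0 =
    (h₄ - h₃) * (h₁ + h₂ - h₃ - h₄) / (2 * h₁ * h₂) := by
  classical
  set V : ℚ⟦X⟧ := PowerSeries.mk (fun n => (h₃ ^ (n + 1) - h₄ ^ (n + 1)) / (Nat.factorial (n+1) : ℚ)) with hV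
  set W : ℚ → ℚ⟦X⟧ := fun h => PowerSeries.mk (fun n => -(h ^ (n + 1) / (Nat.factorial (n+1) : ℚ))) with hW
  have hconst : ∀ h : ℚ, constantCoeff (rescale h (exp ℚ)) = 1 := fun h => by
    rw [← coeff_zero_eq_constantCoeff_apply, coeff_rescale, pow_zero, one_mul,
      coeff_zero_eq_constantCoeff_apply, constantCoeff_exp]
  have hXV : X * V = rescale h₃ (exp ℚ) - rescale h₄ (exp ℚ) := by
    ext n
    cases n with
    | zero => simp [hconst]
    | succ n =>
      simp [hV, coeff_succ_X_mul, coeff_rescale, coeff_exp, div_eq_mul_inv, sub_mul]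
  have hXW : ∀ h : ℚ, X * W h = 1 - rescale h (exp ℚ) := by
    intro h
    ext n
    cases n with
    | zero => simp [hW, hconst]
    | succ n =>
      simp [hW, coeff_succ_X_mul, coeff_rescale, coeff_exp,
        Nat.succ_ne_zero, div_eq_mul_inv]
  set U : ℚ⟦X⟧ := W h₁ * W h₂ with hU
  have hU0 : constantCoeff U = h₁ * h₂ := by
    simp [hU, hW, ← coeff_zero_eq_constantCoeff_apply, coeff_mul]
  have hU0' : constantCoeff U ≠ 0 := by
    rw [hU0]; exact mul_ne_zero H₁ H₂
  have hDnum : ∀ h : ℚ, h ≠ 0 →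
      (1 - ((rescale h (exp ℚ) : PowerSeries ℚ) : LaurentSeries ℚ)) ≠ 0 := by
    intro h hh H
    have h0 : (1 - rescale h (exp ℚ) : ℚ⟦X⟧) = 0 := by
      apply HahnSeries.ofPowerSeries_injective (Γ := ℤ)
      rw [map_sub, map_one, map_zero]
      exact H
    have := congrArg (coeff 1) h0
    simp [coeff_rescale, coeff_exp] at this
    exact hh this
  have hD : ((1 - ((rescale h₁ (exp ℚ) : PowerSeries ℚ) : LaurentSeries ℚ)) *
      (1 - ((rescale h₂ (exp ℚ) : PowerSeries ℚ) : LaurentSeries ℚ))) ≠ 0 :=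
    mul_ne_zero (hDnum h₁ H₁) (hDnum h₂ H₂)
  have hUinv : U⁻¹ * U = 1 := PowerSeries.inv_mul_cancel U hU0'
  have key : (((rescale h₃ (exp ℚ) : PowerSeries ℚ) - (rescale h₄ (exp ℚ) : PowerSeries ℚ) :
          LaurentSeries ℚ) /
        ((1 - ((rescale h₁ (exp ℚ) : PowerSeries ℚ) : LaurentSeries ℚ)) *
          (1 - ((rescale h₂ (exp ℚ) : PowerSeries ℚ) : LaurentSeries ℚ)))) =
      HahnSeries.single (-1 : ℤ) (1 : ℚ) * ((V * U⁻¹ : ℚ⟦X⟧) : LaurentSeries ℚ) := by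
    rw [div_eq_iff hD]
    have e1 : ((rescale h₃ (exp ℚ) : PowerSeries ℚ) - (rescale h₄ (exp ℚ) : PowerSeries ℚ) :
        LaurentSeries ℚ) = ((X * V : ℚ⟦X⟧) : LaurentSeries ℚ) := by
      rw [hXV, map_sub]
    have e2 : ((1 - ((rescale h₁ (exp ℚ) : PowerSeries ℚ) : LaurentSeries ℚ)) *
        (1 - ((rescale h₂ (exp ℚ) : PowerSeries ℚ) : LaurentSeries ℚ))) =
        ((X * W h₁ * (X * W h₂) : ℚ⟦X⟧) : LaurentSeries ℚ) := by
      rw [map_mul, hXW h₁, hXW h₂, map_sub, map_sub, map_one]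
    rw [e1, e2, mul_assoc, ← map_mul]
    have e3 : (V * U⁻¹ : ℚ⟦X⟧) * (X * W h₁ * (X * W h₂)) = X * (X * V) := by
      calc (V * U⁻¹ : ℚ⟦X⟧) * (X * W h₁ * (X * W h₂))
          = X * (X * V) * (U⁻¹ * U) := by rw [hU]; ring
        _ = X * (X * V) := by rw [hUinv, mul_one]
    rw [e3]
    simp [map_mul, HahnSeries.ofPowerSeries_X, ← mul_assoc, HahnSeries.single_mul_single]
  rw [key]
  have e4 : (0 : ℤ) = ((1 : ℕ) : ℤ) + (-1) := by norm_num
  rw [e4, HahnSeries.coeff_single_mul_add, one_mul,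
    LaurentSeries.coeff_coe_powerSeries]
  have hsum : ∀ (f : ℕ × ℕ → ℚ), ∑ ij ∈ Finset.HasAntidiagonal.antidiagonal 1, f ij = f (0,1) + f (1,0) := by
    intro f
    rw [Finset.Nat.sum_antidiagonal_eq_sum_range_succ_mk]
    simp [Finset.sum_range_succ]
  have hU1 : coeff 1 U = h₁ * (h₂ ^ 2 / 2) + h₁ ^ 2 / 2 * h₂ := by
    rw [hU, coeff_mul, hsum]
    simp [hW, Nat.factorial]
    ring
  have hI0 : coeff 0 U⁻¹ = (h₁ * h₂)⁻¹ := by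
    rw [coeff_inv]
    simp [hU0]
  have hI1 : coeff 1 U⁻¹ = -(h₁ * h₂)⁻¹ * (coeff 1 U * (h₁ * h₂)⁻¹) := by
    rw [coeff_inv, if_neg one_ne_zero, hsum]
    simp [hU0, hI0]
  rw [coeff_mul, hsum, hI1, hI0, hU1]
  simp [hV, Nat.factorial]
  field_simp
  ring
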